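/- In dimension 2, the map problem is not equivalent to L² projection of the barycentric projection: take μ = (2/3)δ_{(0,0)} + (1/3)δ_{(1,0)} and ν = (2/3)δ_{(0,0)} + (1/3)δ_{(-1,10)}, and let G be the class of continuous monotone maps g: ℝ² → ℝ² (i.e., ⟨g(x)−g(y), x−y⟩ ≥ 0 for all x, y). Then the unique (in L²(μ)) minimiser of ‖g − π̄*‖_{L²(μ)} over G is π̄* itself, where π* is the unique quadratic-cost optimal plan, and W₂²(π̄*#μ, ν) = 101/6, whereas the monotone map g with g(0,0) = (0,0), g(1,0) = (0,10) satisfies W₂²(g#μ, ν) = 1/3 < 101/6. Hence argmin_{g∈G} W₂²(g#μ, ν) ≠ argmin_{g∈G} ‖g − π̄*‖_{L²(μ)}. -/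

import Mathlib

open Set MeasureTheory
open scoped ENNReal

/-- Squared 2-Wasserstein cost between measures on ℝ², with the squared
Euclidean ground cost. -/
noncomputable def W2sq2 (ρ₁ ρ₂ : MeasureTheory.Measure (ℝ × ℝ)) : ℝ≥0∞ :=
  ⨅ π ∈ {π : MeasureTheory.Measure ((ℝ × ℝ) × (ℝ × ℝ)) |
      π.map Prod.fst = ρ₁ ∧ π.map Prod.snd = ρ₂},
    ∫⁻ q, ENNReal.ofReal ((q.1.1 - q.2.1) ^ 2 + (q.1.2 - q.2.2) ^ 2) ∂π

/-- A map g : ℝ² → ℝ² is monotone if ⟨g(x) − g(y), x − y⟩ ≥ 0 for all x, y. -/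
def MonotoneMap2 (g : ℝ × ℝ → ℝ × ℝ) : Prop :=
  ∀ x y : ℝ × ℝ,
    0 ≤ (g x - g y).1 * (x - y).1 + (g x - g y).2 * (x - y).2

/-- Source measure μ = (2/3)δ₍₀,₀₎ + (1/3)δ₍₁,₀₎. -/
noncomputable def muCE : MeasureTheory.Measure (ℝ × ℝ) :=
  (2 / 3 : ℝ≥0∞) • MeasureTheory.Measure.dirac ((0:ℝ), (0:ℝ)) +
  (1 / 3 : ℝ≥0∞) • MeasureTheory.Measure.dirac ((1:ℝ), (0:ℝ))

/-- Target measure ν = (2/3)δ₍₀,₀₎ + (1/3)δ₍₋₁,₁₀₎. -/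
noncomputable def nuCE : MeasureTheory.Measure (ℝ × ℝ) :=
  (2 / 3 : ℝ≥0∞) • MeasureTheory.Measure.dirac ((0:ℝ), (0:ℝ)) +
  (1 / 3 : ℝ≥0∞) • MeasureTheory.Measure.dirac ((-1:ℝ), (10:ℝ))

/-- The barycentric projection π̄* of the unique quadratic-cost optimal plan
between μ and ν: π̄*(0,0) = (-1/2, 5) and π̄*(1,0) = (0,0). -/
noncomputable def barCE : ℝ × ℝ → ℝ × ℝ := fun x =>
  if x = ((1:ℝ), (0:ℝ)) then ((0:ℝ), (0:ℝ)) else ((-(1/2) : ℝ), (5:ℝ))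

/-- The L²(μ) distance to the barycentric projection. -/
noncomputable def L2distSq (g : ℝ × ℝ → ℝ × ℝ) : ℝ :=
  ∫ x, ((g x - barCE x).1 ^ 2 + (g x - barCE x).2 ^ 2) ∂muCE

/-! ### Auxiliary lemmas -/

lemma integrable_dirac_aux {α E : Type*} [MeasurableSpace α] [MeasurableSingletonClass α]
    [NormedAddCommGroup E] {f : α → E} (hf : StronglyMeasurable f) (a : α) :
    Integrable f (Measure.dirac a) := by
  refine ⟨hf.aestronglyMeasurable, ?_⟩
  simp [HasFiniteIntegral, lintegral_dirac]

lemma integral_muCE (f : ℝ × ℝ → ℝ) (hf : Measurable f) :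
    ∫ x, f x ∂muCE = (2/3) * f ((0:ℝ),(0:ℝ)) + (1/3) * f ((1:ℝ),(0:ℝ)) := by
  have h1 : Integrable f ((2/3 : ℝ≥0∞) • Measure.dirac ((0:ℝ),(0:ℝ))) :=
    (integrable_dirac_aux hf.stronglyMeasurable _).smul_measure
      (by exact (ENNReal.div_lt_top (by norm_num) (by norm_num)).ne)
  have h2 : Integrable f ((1/3 : ℝ≥0∞) • Measure.dirac ((1:ℝ),(0:ℝ))) :=
    (integrable_dirac_aux hf.stronglyMeasurable _).smul_measure
      (by exact (ENNReal.div_lt_top (by norm_num) (by norm_num)).ne)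
  rw [muCE, integral_add_measure h1 h2, integral_smul_measure, integral_smul_measure,
    integral_dirac, integral_dirac]
  norm_num [ENNReal.toReal_div]

lemma barCE_meas : Measurable barCE := by
  unfold barCE
  exact Measurable.ite (measurableSet_eq) measurable_const measurable_const

lemma barCE_a : barCE ((0:ℝ),(0:ℝ)) = ((-(1/2):ℝ), (5:ℝ)) := by
  simp [barCE, Prod.ext_iff]

lemma barCE_b : barCE ((1:ℝ),(0:ℝ)) = ((0:ℝ), (0:ℝ)) := by
  simp [barCE]

lemma map_muCE (g : ℝ × ℝ → ℝ × ℝ) (hg : Measurable g) :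
    MeasureTheory.Measure.map g muCE =
      (2/3 : ℝ≥0∞) • Measure.dirac (g ((0:ℝ),(0:ℝ))) +
      (1/3 : ℝ≥0∞) • Measure.dirac (g ((1:ℝ),(0:ℝ))) := by
  rw [muCE, Measure.map_add _ _ hg, Measure.map_smul, Measure.map_smul,
    Measure.map_dirac' hg, Measure.map_dirac' hg]

/-- Value of the L² distance for continuous `g`. -/
lemma L2_eq (g : ℝ × ℝ → ℝ × ℝ) (hg : Continuous g) :
    L2distSq g = (2/3) * (((g ((0:ℝ),(0:ℝ))).1 + 1/2)^2 + ((g ((0:ℝ),(0:ℝ))).2 - 5)^2)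
      + (1/3) * ((g ((1:ℝ),(0:ℝ))).1^2 + (g ((1:ℝ),(0:ℝ))).2^2) := by
  have hm : Measurable fun x => ((g x - barCE x).1 ^ 2 + (g x - barCE x).2 ^ 2) := by
    have h : Measurable fun x => g x - barCE x := hg.measurable.sub barCE_meas
    exact ((measurable_fst.comp h).pow_const 2).add ((measurable_snd.comp h).pow_const 2)
  rw [L2distSq, integral_muCE _ hm]
  rw [barCE_a, barCE_b]
  norm_num [Prod.fst_sub, Prod.snd_sub]

/-- duality lower bound for W2sq2 -/
lemma W2_lower (ρ₁ ρ₂ : Measure (ℝ × ℝ)) (φ : ℝ × ℝ → ℝ≥0∞) (hφ : Measurable φ)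
    (S : Set (ℝ × ℝ)) (hS : MeasurableSet S) (hρ₂ : ρ₂ Sᶜ = 0)
    (hb : ∀ x y : ℝ × ℝ, y ∈ S → φ x ≤ ENNReal.ofReal ((x.1 - y.1)^2 + (x.2 - y.2)^2)) :
    ∫⁻ x, φ x ∂ρ₁ ≤ W2sq2 ρ₁ ρ₂ := by
  rw [W2sq2]
  refine le_iInf₂ fun π hπ => ?_
  obtain ⟨h1, h2⟩ := hπ
  have hae : ∀ᵐ q ∂π, q.2 ∈ S := by
    rw [ae_iff]
    have : π (Prod.snd ⁻¹' Sᶜ) = ρ₂ Sᶜ := by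
      rw [← h2, Measure.map_apply measurable_snd hS.compl]
    exact this.trans hρ₂
  calc ∫⁻ x, φ x ∂ρ₁ = ∫⁻ q, φ q.1 ∂π := by
        rw [← h1, lintegral_map hφ measurable_fst]
    _ ≤ _ := lintegral_mono_ae (hae.mono fun q hq => hb q.1 q.2 hq)

lemma W2_upper {ρ₁ ρ₂ : Measure (ℝ × ℝ)} (π : Measure ((ℝ × ℝ) × (ℝ × ℝ)))
    (h1 : π.map Prod.fst = ρ₁) (h2 : π.map Prod.snd = ρ₂) :
    W2sq2 ρ₁ ρ₂ ≤ ∫⁻ q, ENNReal.ofReal ((q.1.1 - q.2.1) ^ 2 + (q.1.2 - q.2.2) ^ 2) ∂π :=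
  iInf₂_le π ⟨h1, h2⟩

lemma nuCE_null : nuCE ({((0:ℝ),(0:ℝ)), ((-1:ℝ),(10:ℝ))} : Set (ℝ × ℝ))ᶜ = 0 := by
  have hS : MeasurableSet ({((0:ℝ),(0:ℝ)), ((-1:ℝ),(10:ℝ))} : Set (ℝ × ℝ)) :=
    (measurableSet_singleton _).insert _
  simp [nuCE, Measure.dirac_apply' _ hS.compl]

lemma third_eq : (1/3 : ℝ≥0∞) = ENNReal.ofReal (1/3) := by
  rw [ENNReal.ofReal_div_of_pos (by norm_num)]
  norm_num

lemma twothird_eq : (2/3 : ℝ≥0∞) = ENNReal.ofReal (2/3) := by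
  rw [ENNReal.ofReal_div_of_pos (by norm_num)]
  norm_num

/-- cost of a three-atom plan -/
lemma cost_three (c1 c2 c3 : ℝ≥0∞) (p1 p2 p3 : (ℝ × ℝ) × (ℝ × ℝ)) :
    ∫⁻ q, ENNReal.ofReal ((q.1.1 - q.2.1) ^ 2 + (q.1.2 - q.2.2) ^ 2)
      ∂(c1 • Measure.dirac p1 + c2 • Measure.dirac p2 + c3 • Measure.dirac p3)
    = c1 * ENNReal.ofReal ((p1.1.1 - p1.2.1) ^ 2 + (p1.1.2 - p1.2.2) ^ 2)
    + c2 * ENNReal.ofReal ((p2.1.1 - p2.2.1) ^ 2 + (p2.1.2 - p2.2.2) ^ 2)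
    + c3 * ENNReal.ofReal ((p3.1.1 - p3.2.1) ^ 2 + (p3.1.2 - p3.2.2) ^ 2) := by
  simp [lintegral_add_measure, lintegral_smul_measure, lintegral_dirac]

lemma lintegral_two_atoms (c1 c2 : ℝ≥0∞) (p1 p2 : ℝ × ℝ) (f : ℝ × ℝ → ℝ≥0∞) :
    ∫⁻ x, f x ∂(c1 • Measure.dirac p1 + c2 • Measure.dirac p2) = c1 * f p1 + c2 * f p2 := by
  simp [lintegral_add_measure, lintegral_smul_measure, lintegral_dirac]

lemma h13 : (1/3 + 1/3 : ℝ≥0∞) = 2/3 := by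
  rw [ENNReal.div_add_div_same, one_add_one_eq_two]

/-- W₂² between `(2/3)δ_{s1} + (1/3)δ_{(0,0)}` and ν. -/
lemma W2_bar : W2sq2 ((2/3 : ℝ≥0∞) • Measure.dirac ((-(1/2):ℝ),(5:ℝ)) +
    (1/3 : ℝ≥0∞) • Measure.dirac ((0:ℝ),(0:ℝ))) nuCE = ENNReal.ofReal (101/6) := by
  set s1 : ℝ × ℝ := ((-(1/2):ℝ),(5:ℝ))
  set pa : ℝ × ℝ := ((0:ℝ),(0:ℝ))
  set t2 : ℝ × ℝ := ((-1:ℝ),(10:ℝ))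
  apply le_antisymm
  · -- upper bound via explicit plan
    have h := W2_upper ((1/3 : ℝ≥0∞) • Measure.dirac (s1, pa) +
        (1/3 : ℝ≥0∞) • Measure.dirac (s1, t2) + (1/3 : ℝ≥0∞) • Measure.dirac (pa, pa))
      (ρ₁ := (2/3 : ℝ≥0∞) • Measure.dirac s1 + (1/3 : ℝ≥0∞) • Measure.dirac pa)
      (ρ₂ := nuCE) ?_ ?_
    · refine h.trans_eq ?_
      rw [cost_three]
      rw [third_eq, ← ENNReal.ofReal_mul (by norm_num), ← ENNReal.ofReal_mul (by norm_num),
        ← ENNReal.ofReal_mul (by norm_num), ← ENNReal.ofReal_add (by positivity) (by positivity),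
        ← ENNReal.ofReal_add (by positivity) (by positivity)]
      norm_num [s1, pa, t2]
    · rw [Measure.map_add _ _ measurable_fst, Measure.map_add _ _ measurable_fst,
        Measure.map_smul, Measure.map_smul, Measure.map_smul,
        Measure.map_dirac' measurable_fst, Measure.map_dirac' measurable_fst,
        Measure.map_dirac' measurable_fst]
      show (1/3 : ℝ≥0∞) • Measure.dirac s1 + (1/3 : ℝ≥0∞) • Measure.dirac s1 +
        (1/3 : ℝ≥0∞) • Measure.dirac pa = _
      rw [← add_smul, h13]
    · rw [Measure.map_add _ _ measurable_snd, Measure.map_add _ _ measurable_snd,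
        Measure.map_smul, Measure.map_smul, Measure.map_smul,
        Measure.map_dirac' measurable_snd, Measure.map_dirac' measurable_snd,
        Measure.map_dirac' measurable_snd]
      show (1/3 : ℝ≥0∞) • Measure.dirac pa + (1/3 : ℝ≥0∞) • Measure.dirac t2 +
        (1/3 : ℝ≥0∞) • Measure.dirac pa = nuCE
      rw [add_right_comm, ← add_smul, h13]
      rfl
  · -- lower bound via duality
    have hS : MeasurableSet ({pa, t2} : Set (ℝ × ℝ)) :=
      (measurableSet_singleton _).insert _
    have h := W2_lower ((2/3 : ℝ≥0∞) • Measure.dirac s1 + (1/3 : ℝ≥0∞) • Measure.dirac pa)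
      nuCE (fun x => if x = s1 then ENNReal.ofReal (101/4) else 0)
      (Measurable.ite measurableSet_eq measurable_const measurable_const)
      {pa, t2} hS nuCE_null ?_
    · refine le_trans ?_ h
      rw [lintegral_two_atoms]
      have hne : pa ≠ s1 := by simp [pa, s1, Prod.ext_iff]
      simp only [eq_self_iff_true, if_true, if_neg hne, mul_zero, add_zero]
      rw [twothird_eq, ← ENNReal.ofReal_mul (by norm_num)]
      exact ENNReal.ofReal_le_ofReal (by norm_num)
    · intro x y hy
      by_cases hx : x = s1
      · subst hx
        rcases hy with hy | hy <;> subst hy <;>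
          · simp only [if_pos rfl]
            apply ENNReal.ofReal_le_ofReal
            norm_num [s1, pa, t2]
      · simp [hx]

/-- W₂² between `(2/3)δ_{(0,0)} + (1/3)δ_{(0,10)}` and ν. -/
lemma W2_g : W2sq2 ((2/3 : ℝ≥0∞) • Measure.dirac ((0:ℝ),(0:ℝ)) +
    (1/3 : ℝ≥0∞) • Measure.dirac ((0:ℝ),(10:ℝ))) nuCE = ENNReal.ofReal (1/3) := by
  set pa : ℝ × ℝ := ((0:ℝ),(0:ℝ))
  set u2 : ℝ × ℝ := ((0:ℝ),(10:ℝ))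
  set t2 : ℝ × ℝ := ((-1:ℝ),(10:ℝ))
  apply le_antisymm
  · have h := W2_upper ((2/3 : ℝ≥0∞) • Measure.dirac (pa, pa) +
        (1/3 : ℝ≥0∞) • Measure.dirac (u2, t2) + (0 : ℝ≥0∞) • Measure.dirac (pa, pa))
      (ρ₁ := (2/3 : ℝ≥0∞) • Measure.dirac pa + (1/3 : ℝ≥0∞) • Measure.dirac u2)
      (ρ₂ := nuCE) ?_ ?_
    · refine h.trans_eq ?_
      rw [cost_three]
      rw [third_eq, ← ENNReal.ofReal_mul (by norm_num)]
      norm_num [pa, u2, t2]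
    · simp only [Measure.map_add _ _ measurable_fst, Measure.map_smul,
        Measure.map_dirac' measurable_fst]
      show (2/3 : ℝ≥0∞) • Measure.dirac pa + (1/3 : ℝ≥0∞) • Measure.dirac u2 +
        (0 : ℝ≥0∞) • Measure.dirac pa = _
      simp
    · simp only [Measure.map_add _ _ measurable_snd, Measure.map_smul,
        Measure.map_dirac' measurable_snd]
      show (2/3 : ℝ≥0∞) • Measure.dirac pa + (1/3 : ℝ≥0∞) • Measure.dirac t2 +
        (0 : ℝ≥0∞) • Measure.dirac pa = nuCE
      simp only [zero_smul, add_zero]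
      rfl
  · have hS : MeasurableSet ({pa, t2} : Set (ℝ × ℝ)) :=
      (measurableSet_singleton _).insert _
    have h := W2_lower ((2/3 : ℝ≥0∞) • Measure.dirac pa + (1/3 : ℝ≥0∞) • Measure.dirac u2)
      nuCE (fun x => if x = u2 then ENNReal.ofReal 1 else 0)
      (Measurable.ite measurableSet_eq measurable_const measurable_const)
      {pa, t2} hS nuCE_null ?_
    · refine le_trans ?_ h
      rw [lintegral_two_atoms]
      have hne : pa ≠ u2 := by simp [pa, u2, Prod.ext_iff]
      simp only [eq_self_iff_true, if_true, if_neg hne, mul_zero, zero_add]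
      rw [ENNReal.ofReal_one, mul_one]
      exact le_of_eq third_eq.symm
    · intro x y hy
      by_cases hx : x = u2
      · subst hx
        rcases hy with hy | hy <;> subst hy <;>
          · simp only [if_pos rfl]
            apply ENNReal.ofReal_le_ofReal
            norm_num [u2, pa, t2]
      · simp [hx]

/-- The continuous monotone map matching the barycentric projection on supp μ. -/
noncomputable def g0 : ℝ × ℝ → ℝ × ℝ :=
  fun p => (p.1/2 - 5*p.2 - 1/2, -5*p.1 + 50*p.2 + 5)

lemma g0_cont : Continuous g0 := by unfold g0; fun_prop

lemma g0_mono : MonotoneMap2 g0 := by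
  intro x y
  simp only [g0, Prod.fst_sub, Prod.snd_sub]
  nlinarith [sq_nonneg ((x.1 - y.1) - 10*(x.2 - y.2))]

lemma g0_a : g0 ((0:ℝ),(0:ℝ)) = ((-(1/2):ℝ), (5:ℝ)) := by norm_num [g0]

lemma g0_b : g0 ((1:ℝ),(0:ℝ)) = ((0:ℝ), (0:ℝ)) := by norm_num [g0]

/-- The rotation-type monotone map. -/
noncomputable def g2 : ℝ × ℝ → ℝ × ℝ := fun p => (-10*p.2, 10*p.1)

lemma g2_cont : Continuous g2 := by unfold g2; fun_prop

lemma g2_mono : MonotoneMap2 g2 := by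
  intro x y
  simp only [g2, Prod.fst_sub, Prod.snd_sub]
  ring_nf
  nlinarith [sq_nonneg (x.1 - y.1)]

lemma g2_a : g2 ((0:ℝ),(0:ℝ)) = ((0:ℝ), (0:ℝ)) := by norm_num [g2]

lemma g2_b : g2 ((1:ℝ),(0:ℝ)) = ((0:ℝ), (10:ℝ)) := by norm_num [g2]

/-- In dimension 2, the map problem is not equivalent to the L² projection of
the barycentric projection: over the class G of continuous monotone maps, the
minimiser of ‖g − π̄*‖_{L²(μ)} is π̄* itself (characterised by its values on the
support of μ), with W₂²(π̄*#μ, ν) = 101/6, while a monotone map g with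
g(0,0) = (0,0), g(1,0) = (0,10) achieves W₂²(g#μ, ν) = 1/3 < 101/6; hence the
two argmin sets differ. -/
theorem two_dim_counterexample :
    (∀ g ∈ {g : ℝ × ℝ → ℝ × ℝ | Continuous g ∧ MonotoneMap2 g},
      ((∀ g' ∈ {g : ℝ × ℝ → ℝ × ℝ | Continuous g ∧ MonotoneMap2 g},
          L2distSq g ≤ L2distSq g') ↔
        (g ((0:ℝ), (0:ℝ)) = ((-(1/2) : ℝ), (5:ℝ)) ∧
          g ((1:ℝ), (0:ℝ)) = ((0:ℝ), (0:ℝ))))) ∧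
    W2sq2 (MeasureTheory.Measure.map barCE muCE) nuCE = ENNReal.ofReal (101 / 6) ∧
    (∃ g ∈ {g : ℝ × ℝ → ℝ × ℝ | Continuous g ∧ MonotoneMap2 g},
      g ((0:ℝ), (0:ℝ)) = ((0:ℝ), (0:ℝ)) ∧ g ((1:ℝ), (0:ℝ)) = ((0:ℝ), (10:ℝ)) ∧
      W2sq2 (MeasureTheory.Measure.map g muCE) nuCE = ENNReal.ofReal (1 / 3)) ∧
    {g | (Continuous g ∧ MonotoneMap2 g) ∧
        ∀ g' ∈ {g : ℝ × ℝ → ℝ × ℝ | Continuous g ∧ MonotoneMap2 g},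
          W2sq2 (MeasureTheory.Measure.map g muCE) nuCE ≤
            W2sq2 (MeasureTheory.Measure.map g' muCE) nuCE} ≠
    {g | (Continuous g ∧ MonotoneMap2 g) ∧
        ∀ g' ∈ {g : ℝ × ℝ → ℝ × ℝ | Continuous g ∧ MonotoneMap2 g},
          L2distSq g ≤ L2distSq g'} := by
  have hmapbar : MeasureTheory.Measure.map barCE muCE =
      (2/3 : ℝ≥0∞) • Measure.dirac ((-(1/2):ℝ),(5:ℝ)) +
      (1/3 : ℝ≥0∞) • Measure.dirac ((0:ℝ),(0:ℝ)) := by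
    rw [map_muCE barCE barCE_meas, barCE_a, barCE_b]
  have hW2bar : W2sq2 (MeasureTheory.Measure.map barCE muCE) nuCE = ENNReal.ofReal (101/6) := by
    rw [hmapbar]; exact W2_bar
  have hL2g0 : L2distSq g0 = 0 := by
    rw [L2_eq g0 g0_cont, g0_a, g0_b]; norm_num
  refine ⟨?_, hW2bar, ?_, ?_⟩
  · -- Conjunct 1
    rintro g ⟨hgc, hgm⟩
    constructor
    · intro hmin
      have h0 := hmin g0 ⟨g0_cont, g0_mono⟩
      rw [hL2g0, L2_eq g hgc] at h0
      set p := (g ((0:ℝ),(0:ℝ))).1 + 1/2 with hp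
      set q := (g ((0:ℝ),(0:ℝ))).2 - 5 with hq
      set r := (g ((1:ℝ),(0:ℝ))).1 with hr
      set s := (g ((1:ℝ),(0:ℝ))).2 with hs
      clear_value p q r s
      have hp0 : p = 0 := pow_eq_zero_iff two_ne_zero |>.mp
        (le_antisymm (by nlinarith [sq_nonneg q, sq_nonneg r, sq_nonneg s]) (sq_nonneg p))
      have hq0 : q = 0 := pow_eq_zero_iff two_ne_zero |>.mp
        (le_antisymm (by nlinarith [sq_nonneg p, sq_nonneg r, sq_nonneg s]) (sq_nonneg q))
      have hr0 : r = 0 := pow_eq_zero_iff two_ne_zero |>.mp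
        (le_antisymm (by nlinarith [sq_nonneg p, sq_nonneg q, sq_nonneg s]) (sq_nonneg r))
      have hs0 : s = 0 := pow_eq_zero_iff two_ne_zero |>.mp
        (le_antisymm (by nlinarith [sq_nonneg p, sq_nonneg q, sq_nonneg r]) (sq_nonneg s))
      refine ⟨Prod.ext ?_ ?_, Prod.ext ?_ ?_⟩
      · show (g ((0:ℝ),(0:ℝ))).1 = -(1/2)
        rw [hp] at hp0; linarith
      · show (g ((0:ℝ),(0:ℝ))).2 = 5
        rw [hq] at hq0; linarith
      · show (g ((1:ℝ),(0:ℝ))).1 = 0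
        rw [hr] at hr0; linarith
      · show (g ((1:ℝ),(0:ℝ))).2 = 0
        rw [hs] at hs0; linarith
    · rintro ⟨h1, h2⟩ g' ⟨h'c, h'm⟩
      rw [L2_eq g hgc, L2_eq g' h'c, h1, h2]
      have : ∀ a b : ℝ, 0 ≤ (2/3) * (a^2 + b^2) := by intro a b; positivity
      norm_num
      positivity
  · -- Conjunct 3
    refine ⟨g2, ⟨g2_cont, g2_mono⟩, g2_a, g2_b, ?_⟩
    rw [map_muCE g2 g2_cont.measurable, g2_a, g2_b]
    exact W2_g
  · -- Conjunct 4
    intro hEq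
    have hg0R : g0 ∈ {g | (Continuous g ∧ MonotoneMap2 g) ∧
        ∀ g' ∈ {g : ℝ × ℝ → ℝ × ℝ | Continuous g ∧ MonotoneMap2 g},
          L2distSq g ≤ L2distSq g'} := by
      refine ⟨⟨g0_cont, g0_mono⟩, fun g' hg' => ?_⟩
      rw [hL2g0, L2_eq g' hg'.1]
      positivity
    rw [← hEq] at hg0R
    have h := hg0R.2 g2 ⟨g2_cont, g2_mono⟩
    rw [map_muCE g0 g0_cont.measurable, g0_a, g0_b, W2_bar,
      map_muCE g2 g2_cont.measurable, g2_a, g2_b, W2_g] at h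
    rw [ENNReal.ofReal_le_ofReal_iff (by norm_num)] at h
    norm_num at h
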